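/- Let θ > 0. Let F, G : ℝ → ℝ be nondecreasing right-continuous functions with associated Lebesgue–Stieltjes measures μ_F, μ_G, and set D(s) := (F(s) − F(0)) − (G(s) − G(0)). Let h₁, h₂ : ℝ → ℝ be nondecreasing right-continuous and put h := h₁ − h₂, H := sup_{s ∈ [0,θ]} |h(s)| and V := (h₁(θ) − h₁(0)) + (h₂(θ) − h₂(0)). Then for every t ∈ [0,θ]: | ∫_{(0,t]} h(s−) μ_F(ds) − ∫_{(0,t]} h(s−) μ_G(ds) | ≤ (H + V) · sup_{s ∈ [0,θ]} |D(s)|. -/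

import Mathlib

open Set MeasureTheory Filter Topology
open scoped ENNReal

namespace SIBPAux

lemma leftLim_sub_eq (h₁ h₂ : StieltjesFunction ℝ) (s : ℝ) :
    Function.leftLim (fun u => h₁ u - h₂ u) s
      = Function.leftLim h₁ s - Function.leftLim h₂ s :=
  leftLim_eq_of_tendsto
    ((h₁.mono.tendsto_leftLim s).sub (h₂.mono.tendsto_leftLim s))

lemma integrableOn_of_forall_le {μ : Measure ℝ} {s : Set ℝ} (hs : MeasurableSet s)
    (hμ : μ s ≠ ∞) {f : ℝ → ℝ} (hf : Measurable f) {C : ℝ} (hC : ∀ x ∈ s, |f x| ≤ C) :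
    IntegrableOn f s μ :=
  Measure.integrableOn_of_bounded hμ hf.aestronglyMeasurable
    ((ae_restrict_iff' hs).2 (ae_of_all _ fun x hx => by
      simpa [Real.norm_eq_abs] using hC x hx))

lemma integrableOn_leftLim (h : StieltjesFunction ℝ) {μ : Measure ℝ} {t : ℝ}
    (hμ : μ (Ioc (0:ℝ) t) ≠ ∞) :
    IntegrableOn (Function.leftLim h) (Ioc (0:ℝ) t) μ := by
  refine integrableOn_of_forall_le measurableSet_Ioc hμ h.mono.leftLim.measurable
    (C := max |Function.leftLim h 0| |Function.leftLim h t|) ?_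
  intro x hx
  exact abs_le_max_abs_abs (h.mono.leftLim hx.1.le) (h.mono.leftLim hx.2)

/-- Key Fubini identity. -/
lemma key (F h : StieltjesFunction ℝ) {t : ℝ} (ht : 0 ≤ t) :
    ∫ s in Ioc (0:ℝ) t, Function.leftLim h s ∂F.measure
      = h 0 * (F t - F 0) + ∫ u in Ioo (0:ℝ) t, (F t - F u) ∂h.measure := by
  set μ := F.measure with hμdef
  set ν := h.measure with hνdef
  set A : Set (ℝ × ℝ) := {p | p.1 ∈ Ioc (0:ℝ) t ∧ p.2 ∈ Ioo (0:ℝ) p.1} with hA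
  have hAmeas : MeasurableSet A := by
    have : A = (Ioc (0:ℝ) t ×ˢ (Ioi (0:ℝ))) ∩ {p : ℝ × ℝ | p.2 < p.1} := by
      ext ⟨s, u⟩
      simp only [hA, mem_setOf_eq, mem_inter_iff, mem_prod, mem_Ioc, mem_Ioo, mem_Ioi]
      tauto
    rw [this]
    exact (measurableSet_Ioc.prod measurableSet_Ioi).inter
      (measurableSet_lt measurable_snd measurable_fst)
  have way1 : (μ.prod ν) A = ∫⁻ s in Ioc (0:ℝ) t, ν (Ioo (0:ℝ) s) ∂μ := by
    rw [Measure.prod_apply hAmeas, ← lintegral_indicator measurableSet_Ioc _]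
    congr 1
    ext s
    by_cases hs : s ∈ Ioc (0:ℝ) t
    · rw [indicator_of_mem hs]
      congr 1
      ext u
      simp only [hA, mem_preimage, mem_setOf_eq]
      exact and_iff_right hs
    · rw [indicator_of_notMem hs]
      have : Prod.mk s ⁻¹' A = ∅ := by
        ext u; simp only [hA, mem_preimage, mem_setOf_eq, mem_empty_iff_false, iff_false]
        exact fun h' => hs h'.1
      simp [this]
  have way2 : (μ.prod ν) A = ∫⁻ u in Ioo (0:ℝ) t, ENNReal.ofReal (F t - F u) ∂ν := by
    rw [Measure.prod_apply_symm hAmeas, ← lintegral_indicator measurableSet_Ioo _]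
    congr 1
    ext u
    by_cases hu : u ∈ Ioo (0:ℝ) t
    · rw [indicator_of_mem hu]
      have : (fun s => (s, u)) ⁻¹' A = Ioc u t := by
        ext s
        simp only [hA, mem_preimage, mem_setOf_eq, mem_Ioc, mem_Ioo]
        constructor
        · rintro ⟨⟨_, hst⟩, _, hus⟩; exact ⟨hus, hst⟩
        · rintro ⟨hus, hst⟩; exact ⟨⟨hu.1.trans hus, hst⟩, hu.1, hus⟩
      rw [this, hμdef, F.measure_Ioc]
    · rw [indicator_of_notMem hu]
      have : (fun s => (s, u)) ⁻¹' A = ∅ := by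
        ext s
        simp only [hA, mem_preimage, mem_setOf_eq, mem_empty_iff_false, iff_false]
        rintro ⟨⟨_, hst⟩, hu0, hus⟩
        exact hu ⟨hu0, hus.trans_le hst⟩
      simp [this]
  have pt : EqOn (Function.leftLim h) (fun s => h 0 + (ν (Ioo (0:ℝ) s)).toReal)
      (Ioc (0:ℝ) t) := by
    intro s hs
    have h0s : (0:ℝ) < s := hs.1
    simp only [hνdef, h.measure_Ioo,
      ENNReal.toReal_ofReal (sub_nonneg.2 (h.mono.le_leftLim h0s))]
    ring
  rw [setIntegral_congr_fun measurableSet_Ioc pt]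
  have hg_meas : Measurable (fun s => ν (Ioo (0:ℝ) s)) :=
    Monotone.measurable fun a b hab => measure_mono (Ioo_subset_Ioo le_rfl hab)
  have hg_lt : ∀ s, ν (Ioo (0:ℝ) s) < ∞ := fun s => by
    rw [hνdef, h.measure_Ioo]; exact ENNReal.ofReal_lt_top
  have hμIoc : μ (Ioc (0:ℝ) t) ≠ ∞ := by
    rw [hμdef, F.measure_Ioc]; exact ENNReal.ofReal_ne_top
  have hInt : Integrable (fun s => (ν (Ioo (0:ℝ) s)).toReal) (μ.restrict (Ioc (0:ℝ) t)) := by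
    refine Measure.integrableOn_of_bounded hμIoc
      (ENNReal.measurable_toReal.comp hg_meas).aestronglyMeasurable
      (M := (ν (Ioc (0:ℝ) t)).toReal) ?_
    refine (ae_restrict_iff' measurableSet_Ioc).2 (ae_of_all _ fun s hs => ?_)
    have h1 : ν (Ioo (0:ℝ) s) ≤ ν (Ioc (0:ℝ) t) :=
      measure_mono ((Ioo_subset_Ioo le_rfl hs.2).trans Ioo_subset_Ioc_self)
    have h2 : ν (Ioc (0:ℝ) t) ≠ ∞ := by rw [hνdef, h.measure_Ioc]; exact ENNReal.ofReal_ne_top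
    rw [Real.norm_eq_abs, abs_of_nonneg ENNReal.toReal_nonneg]
    exact ENNReal.toReal_mono h2 h1
  rw [integral_add (integrableOn_const (C := h 0) hμIoc) hInt, setIntegral_const]
  congr 1
  · rw [measureReal_def, hμdef, F.measure_Ioc, ENNReal.toReal_ofReal (sub_nonneg.2 (F.mono ht)), smul_eq_mul,
      mul_comm]
  · rw [integral_toReal hg_meas.aemeasurable (ae_of_all _ hg_lt), way1.symm,
      way2]
    rw [integral_eq_lintegral_of_nonneg_ae ((ae_restrict_iff' measurableSet_Ioo).2
      (ae_of_all _ fun u hu => sub_nonneg.2 (F.mono hu.2.le)))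
      (measurable_const.sub F.mono.measurable).aestronglyMeasurable]

end SIBPAux

open SIBPAux

/-- Integration-by-parts bound for Lebesgue–Stieltjes integrals: for nondecreasing
right-continuous `F, G` with Stieltjes measures `μ_F, μ_G`, a function `h = h₁ − h₂`
of bounded variation (difference of nondecreasing right-continuous functions), with
`H = sup_{[0,θ]} |h|`, `V = (h₁(θ)−h₁(0)) + (h₂(θ)−h₂(0))` and
`D(s) = (F(s)−F(0)) − (G(s)−G(0))`, one has for all `t ∈ [0,θ]`:
`|∫_{(0,t]} h(s−) μ_F(ds) − ∫_{(0,t]} h(s−) μ_G(ds)| ≤ (H + V)·sup_{[0,θ]} |D|`. -/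
theorem stieltjes_integration_by_parts_bound (θ : ℝ) (hθ : 0 < θ)
    (F G h₁ h₂ : StieltjesFunction ℝ)
    (H V : ℝ)
    (hH : H = sSup ((fun s => |h₁ s - h₂ s|) '' Icc 0 θ))
    (hV : V = (h₁ θ - h₁ 0) + (h₂ θ - h₂ 0)) :
    ∀ t ∈ Icc (0:ℝ) θ,
      |(∫ s in Ioc (0:ℝ) t, Function.leftLim (fun u => h₁ u - h₂ u) s ∂F.measure)
          - ∫ s in Ioc (0:ℝ) t, Function.leftLim (fun u => h₁ u - h₂ u) s ∂G.measure|
        ≤ (H + V) * sSup ((fun s => |(F s - F 0) - (G s - G 0)|) '' Icc 0 θ) := by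
  rintro t ⟨ht0, htθ⟩
  set D : ℝ → ℝ := fun s => (F s - F 0) - (G s - G 0) with hD
  set sD : ℝ := sSup ((fun s => |(F s - F 0) - (G s - G 0)|) '' Icc 0 θ) with hsDdef
  have hDbdd : BddAbove ((fun s => |(F s - F 0) - (G s - G 0)|) '' Icc 0 θ) := by
    refine ⟨(F θ - F 0) + (G θ - G 0), ?_⟩
    rintro x ⟨s, hs, rfl⟩
    have h1 := F.mono hs.1
    have h2 := F.mono hs.2
    have h3 := G.mono hs.1
    have h4 := G.mono hs.2
    rw [abs_sub_le_iff]
    constructor <;> linarith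
  have hDle : ∀ s ∈ Icc (0:ℝ) θ, |D s| ≤ sD := fun s hs => le_csSup hDbdd ⟨s, hs, rfl⟩
  have hsD0 : 0 ≤ sD := by
    have := hDle 0 ⟨le_rfl, hθ.le⟩
    simp only [hD, sub_self, abs_zero] at this
    linarith [abs_nonneg ((F 0 - F 0) - (G 0 - G 0))]
  have hHbdd : BddAbove ((fun s => |h₁ s - h₂ s|) '' Icc 0 θ) := by
    refine ⟨|h₁ 0| + |h₁ θ| + |h₂ 0| + |h₂ θ|, ?_⟩
    rintro x ⟨s, hs, rfl⟩
    have b1 : |h₁ s| ≤ max |h₁ 0| |h₁ θ| := abs_le_max_abs_abs (h₁.mono hs.1) (h₁.mono hs.2)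
    have b2 : |h₂ s| ≤ max |h₂ 0| |h₂ θ| := abs_le_max_abs_abs (h₂.mono hs.1) (h₂.mono hs.2)
    have := abs_sub (h₁ s) (h₂ s)
    have m1 : max |h₁ 0| |h₁ θ| ≤ |h₁ 0| + |h₁ θ| :=
      max_le (le_add_of_nonneg_right (abs_nonneg _)) (le_add_of_nonneg_left (abs_nonneg _))
    have m2 : max |h₂ 0| |h₂ θ| ≤ |h₂ 0| + |h₂ θ| :=
      max_le (le_add_of_nonneg_right (abs_nonneg _)) (le_add_of_nonneg_left (abs_nonneg _))
    linarith
  have hhle : ∀ s ∈ Icc (0:ℝ) θ, |h₁ s - h₂ s| ≤ H := fun s hs => by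
    rw [hH]; exact le_csSup hHbdd ⟨s, hs, rfl⟩
  have hH0 : 0 ≤ H := le_trans (abs_nonneg _) (hhle 0 ⟨le_rfl, hθ.le⟩)
  have hV0 : 0 ≤ V := by
    rw [hV]
    have := h₁.mono hθ.le
    have := h₂.mono hθ.le
    linarith
  rcases ht0.eq_or_lt with rfl | htpos
  · simp only [Ioc_self, Measure.restrict_empty, integral_zero_measure, sub_zero, abs_zero]
    exact mul_nonneg (add_nonneg hH0 hV0) hsD0
  -- main case : 0 < t
  have hIF₁ : IntegrableOn (Function.leftLim h₁) (Ioc (0:ℝ) t) F.measure :=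
    integrableOn_leftLim h₁ (by rw [F.measure_Ioc]; exact ENNReal.ofReal_ne_top)
  have hIF₂ : IntegrableOn (Function.leftLim h₂) (Ioc (0:ℝ) t) F.measure :=
    integrableOn_leftLim h₂ (by rw [F.measure_Ioc]; exact ENNReal.ofReal_ne_top)
  have hIG₁ : IntegrableOn (Function.leftLim h₁) (Ioc (0:ℝ) t) G.measure :=
    integrableOn_leftLim h₁ (by rw [G.measure_Ioc]; exact ENNReal.ofReal_ne_top)
  have hIG₂ : IntegrableOn (Function.leftLim h₂) (Ioc (0:ℝ) t) G.measure :=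
    integrableOn_leftLim h₂ (by rw [G.measure_Ioc]; exact ENNReal.ofReal_ne_top)
  have split : ∀ (M : Measure ℝ), IntegrableOn (Function.leftLim h₁) (Ioc (0:ℝ) t) M →
      IntegrableOn (Function.leftLim h₂) (Ioc (0:ℝ) t) M →
      ∫ s in Ioc (0:ℝ) t, Function.leftLim (fun u => h₁ u - h₂ u) s ∂M
        = (∫ s in Ioc (0:ℝ) t, Function.leftLim h₁ s ∂M)
          - ∫ s in Ioc (0:ℝ) t, Function.leftLim h₂ s ∂M := by
    intro M hM1 hM2
    rw [← integral_sub hM1 hM2]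
    exact integral_congr_ae (ae_of_all _ fun s => leftLim_sub_eq h₁ h₂ s)
  rw [split F.measure hIF₁ hIF₂, split G.measure hIG₁ hIG₂,
    key F h₁ ht0, key F h₂ ht0, key G h₁ ht0, key G h₂ ht0]
  -- integrability on Ioo for the u-integrals
  have hν₁fin : h₁.measure (Ioo (0:ℝ) t) ≠ ∞ := by
    rw [h₁.measure_Ioo]; exact ENNReal.ofReal_ne_top
  have hν₂fin : h₂.measure (Ioo (0:ℝ) t) ≠ ∞ := by
    rw [h₂.measure_Ioo]; exact ENNReal.ofReal_ne_top
  have hFint : ∀ (ν : Measure ℝ), ν (Ioo (0:ℝ) t) ≠ ∞ →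
      IntegrableOn (fun u => F t - F u) (Ioo (0:ℝ) t) ν := fun ν hν =>
    integrableOn_of_forall_le measurableSet_Ioo hν
      (measurable_const.sub F.mono.measurable) (C := F t - F 0)
      (fun u hu => by
        rw [abs_of_nonneg (sub_nonneg.2 (F.mono hu.2.le))]
        linarith [F.mono hu.1.le])
  have hGint : ∀ (ν : Measure ℝ), ν (Ioo (0:ℝ) t) ≠ ∞ →
      IntegrableOn (fun u => G t - G u) (Ioo (0:ℝ) t) ν := fun ν hν =>
    integrableOn_of_forall_le measurableSet_Ioo hν
      (measurable_const.sub G.mono.measurable) (C := G t - G 0)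
      (fun u hu => by
        rw [abs_of_nonneg (sub_nonneg.2 (G.mono hu.2.le))]
        linarith [G.mono hu.1.le])
  have hDmeas : Measurable D :=
    (F.mono.measurable.sub measurable_const).sub (G.mono.measurable.sub measurable_const)
  have hIoosub : Ioo (0:ℝ) t ⊆ Icc (0:ℝ) θ := fun u hu => ⟨hu.1.le, hu.2.le.trans htθ⟩
  have hDint : ∀ (ν : Measure ℝ), ν (Ioo (0:ℝ) t) ≠ ∞ →
      IntegrableOn D (Ioo (0:ℝ) t) ν := fun ν hν =>
    integrableOn_of_forall_le measurableSet_Ioo hν hDmeas (C := sD)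
      (fun u hu => hDle u (hIoosub hu))
  -- combine the u-integrals : (F t - F u) - (G t - G u) = D t - D u
  have comb : ∀ (ν : Measure ℝ), ν (Ioo (0:ℝ) t) ≠ ∞ →
      (∫ u in Ioo (0:ℝ) t, (F t - F u) ∂ν) - ∫ u in Ioo (0:ℝ) t, (G t - G u) ∂ν
        = D t * (ν (Ioo (0:ℝ) t)).toReal - ∫ u in Ioo (0:ℝ) t, D u ∂ν := by
    intro ν hν
    rw [← integral_sub (hFint ν hν) (hGint ν hν)]
    have : ∫ u in Ioo (0:ℝ) t, ((F t - F u) - (G t - G u)) ∂ν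
        = ∫ u in Ioo (0:ℝ) t, (D t - D u) ∂ν := by
      refine setIntegral_congr_fun measurableSet_Ioo fun u _ => ?_
      simp only [hD]; ring
    rw [this, integral_sub (integrableOn_const (C := D t) hν) (hDint ν hν),
      setIntegral_const, measureReal_def, smul_eq_mul, mul_comm]
  -- name the pieces
  set J₁ : ℝ := ∫ u in Ioo (0:ℝ) t, D u ∂h₁.measure with hJ₁def
  set J₂ : ℝ := ∫ u in Ioo (0:ℝ) t, D u ∂h₂.measure with hJ₂def
  set Lt : ℝ := Function.leftLim h₁ t - Function.leftLim h₂ t with hLtdef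
  have em₁ : (h₁.measure (Ioo (0:ℝ) t)).toReal = Function.leftLim h₁ t - h₁ 0 := by
    rw [h₁.measure_Ioo, ENNReal.toReal_ofReal (sub_nonneg.2 (h₁.mono.le_leftLim htpos))]
  have em₂ : (h₂.measure (Ioo (0:ℝ) t)).toReal = Function.leftLim h₂ t - h₂ 0 := by
    rw [h₂.measure_Ioo, ENNReal.toReal_ofReal (sub_nonneg.2 (h₂.mono.le_leftLim htpos))]
  have e1 := comb h₁.measure hν₁fin
  have e2 := comb h₂.measure hν₂fin
  rw [em₁] at e1
  rw [em₂] at e2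
  have key2 : (h₁ 0 * (F t - F 0) + ∫ u in Ioo (0:ℝ) t, (F t - F u) ∂h₁.measure
        - (h₂ 0 * (F t - F 0) + ∫ u in Ioo (0:ℝ) t, (F t - F u) ∂h₂.measure))
      - (h₁ 0 * (G t - G 0) + (∫ u in Ioo (0:ℝ) t, (G t - G u) ∂h₁.measure)
        - (h₂ 0 * (G t - G 0) + ∫ u in Ioo (0:ℝ) t, (G t - G u) ∂h₂.measure))
      = D t * Lt - J₁ + J₂ := by
    simp only [hD, hLtdef]
    linear_combination e1 - e2
  have hLt : |Lt| ≤ H := by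
    have htt : Tendsto (fun s => h₁ s - h₂ s) (𝓝[<] t) (𝓝 Lt) :=
      (h₁.mono.tendsto_leftLim t).sub (h₂.mono.tendsto_leftLim t)
    refine le_of_tendsto htt.abs ?_
    filter_upwards [Ioo_mem_nhdsLT_of_mem (⟨htpos, le_rfl⟩ : t ∈ Ioc (0:ℝ) t)] with s hs
    exact hhle s (hIoosub hs)
  have hJbound : ∀ (h' : StieltjesFunction ℝ), h'.measure (Ioo (0:ℝ) t) ≠ ∞ →
      (h'.measure (Ioo (0:ℝ) t)).toReal = Function.leftLim h' t - h' 0 →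
      |∫ u in Ioo (0:ℝ) t, D u ∂h'.measure| ≤ sD * (h' θ - h' 0) := by
    intro h' hfin hm
    have hb := norm_setIntegral_le_of_norm_le_const (μ := h'.measure) (s := Ioo (0:ℝ) t)
      (f := D) hfin.lt_top
      (C := sD) (fun u hu => by rw [Real.norm_eq_abs]; exact hDle u (hIoosub hu))
    rw [Real.norm_eq_abs] at hb
    refine hb.trans ?_
    rw [measureReal_def, hm]
    exact mul_le_mul_of_nonneg_left (by linarith [h'.mono.leftLim_le htθ]) hsD0
  have hJb₁ : |J₁| ≤ sD * (h₁ θ - h₁ 0) := hJ₁def ▸ hJbound h₁ hν₁fin em₁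
  have hJb₂ : |J₂| ≤ sD * (h₂ θ - h₂ 0) := hJ₂def ▸ hJbound h₂ hν₂fin em₂
  have hDt : |D t| ≤ sD := hDle t ⟨ht0, htθ⟩
  calc |(h₁ 0 * (F t - F 0) + ∫ u in Ioo (0:ℝ) t, (F t - F u) ∂h₁.measure
        - (h₂ 0 * (F t - F 0) + ∫ u in Ioo (0:ℝ) t, (F t - F u) ∂h₂.measure))
      - (h₁ 0 * (G t - G 0) + (∫ u in Ioo (0:ℝ) t, (G t - G u) ∂h₁.measure)
        - (h₂ 0 * (G t - G 0) + ∫ u in Ioo (0:ℝ) t, (G t - G u) ∂h₂.measure))|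
      = |D t * Lt - J₁ + J₂| := by rw [key2]
    _ ≤ |D t * Lt - J₁| + |J₂| := abs_add_le _ _
    _ ≤ |D t * Lt| + |J₁| + |J₂| := by linarith [abs_sub (D t * Lt) J₁]
    _ ≤ sD * H + sD * (h₁ θ - h₁ 0) + sD * (h₂ θ - h₂ 0) := by
        have hmul : |D t * Lt| ≤ sD * H := by
          rw [abs_mul]; exact mul_le_mul hDt hLt (abs_nonneg _) hsD0
        linarith
    _ = (H + V) * sD := by rw [hV]; ring
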